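/- If T is a tree on n vertices and k ≥ 1 is an integer, then the k-th power T^k has at least k·n − k(k+1)/2 edges. -/

import Mathlib

/-- The `k`-th power of a simple graph `G`: two distinct vertices are adjacent
iff their distance in `G` is at most `k`. -/
def SimpleGraph.power {V : Type*} (G : SimpleGraph V) (k : ℕ) : SimpleGraph V where
  Adj u v := u ≠ v ∧ G.dist u v ≤ k
  symm := ⟨fun u v h => ⟨h.1.symm, by rw [SimpleGraph.dist_comm]; exact h.2⟩⟩
  loopless := ⟨fun v h => h.1 rfl⟩

namespace TreePowerAux

open SimpleGraph Walk

variable {V : Type*} {G : SimpleGraph V} {T : SimpleGraph V} {u v x y z r : V}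

lemma exists_walk_getVert (p : G.Walk u v) (i : ℕ) :
    ∃ w : G.Walk u (p.getVert i), w.length = min i p.length := by
  induction p generalizing i with
  | nil => exact ⟨SimpleGraph.Walk.nil, by simp [SimpleGraph.Walk.getVert]⟩
  | cons h q ih =>
    cases i with
    | zero =>
      refine ⟨SimpleGraph.Walk.nil.copy rfl ?_, by simp⟩
      simp [SimpleGraph.Walk.getVert]
    | succ i =>
      obtain ⟨w, hw⟩ := ih i
      exact ⟨SimpleGraph.Walk.cons h w, by simp [hw, SimpleGraph.Walk.length_cons]⟩

lemma dist_getVert_le (p : G.Walk u v) (i : ℕ) : G.dist u (p.getVert i) ≤ i := by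
  obtain ⟨w, hw⟩ := exists_walk_getVert p i
  calc G.dist u (p.getVert i) ≤ w.length := SimpleGraph.dist_le w
  _ ≤ i := by omega

lemma dist_getVert_right_le (p : G.Walk u v) {i : ℕ} (hi : i ≤ p.length) :
    G.dist (p.getVert i) v ≤ p.length - i := by
  have h := dist_getVert_le p.reverse (p.length - i)
  rw [SimpleGraph.Walk.getVert_reverse] at h
  rw [Nat.sub_sub_self hi] at h
  rw [SimpleGraph.dist_comm]
  exact h

lemma geodesic_getVert (hc : G.Connected) (p : G.Walk u v) (hp : p.length = G.dist u v)
    {i : ℕ} (hi : i ≤ p.length) :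
    G.dist u (p.getVert i) = i ∧ G.dist (p.getVert i) v = p.length - i := by
  have h1 := dist_getVert_le p i
  have h2 := dist_getVert_right_le p hi
  have h3 : G.dist u v ≤ G.dist u (p.getVert i) + G.dist (p.getVert i) v :=
    hc.dist_triangle
  omega

/-- every vertex on a walk from `r` has distance from `r` at most the length. -/
lemma dist_le_of_mem_support (p : G.Walk r y) (hx : x ∈ p.support) :
    G.dist r x ≤ p.length := by
  classical
  have h1 := SimpleGraph.dist_le (p.takeUntil x hx)
  have h2 := SimpleGraph.Walk.length_takeUntil_le p hx
  omega

/-- In a tree, adjacent vertices have distances from `r` differing by exactly one. -/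
lemma adj_dist_step (hT : T.IsTree) (r : V) (hxy : T.Adj x y) :
    T.dist r y = T.dist r x + 1 ∨ T.dist r x = T.dist r y + 1 := by
  have hc := hT.isConnected
  have hxy1 : T.dist x y = 1 := (SimpleGraph.dist_eq_one_iff_adj).2 hxy
  have h1 : T.dist r y ≤ T.dist r x + 1 := by
    have := hc.dist_triangle (u := r) (v := x) (w := y); omega
  have h2 : T.dist r x ≤ T.dist r y + 1 := by
    have ht := hc.dist_triangle (u := r) (v := y) (w := x)
    have he : T.dist y x = 1 := by rwa [SimpleGraph.dist_comm] at hxy1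
    omega
  have hne : T.dist r x ≠ T.dist r y := by
    intro hEq
    -- both equal to m; derive contradiction via unique paths
    classical
    set m := T.dist r y with hm
    obtain ⟨py, hpy⟩ := hc.exists_walk_length_eq_dist r y
    obtain ⟨px, hpx⟩ := hc.exists_walk_length_eq_dist r x
    have hpyp : py.IsPath := py.isPath_of_length_eq_dist hpy
    have hpxp : px.IsPath := px.isPath_of_length_eq_dist hpx
    have hxny : x ∉ py.support := by
      intro hmem
      -- decompose py at x : length m walk; takeUntil has length ≥ dist r x = m,
      -- so dropUntil has length 0, giving x = y, contradiction with adjacency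
      have hspec := py.take_spec hmem
      have hlen : (py.takeUntil x hmem).length + (py.dropUntil x hmem).length = py.length := by
        conv_rhs => rw [← hspec]
        rw [SimpleGraph.Walk.length_append]
      have hd1 : T.dist r x ≤ (py.takeUntil x hmem).length := SimpleGraph.dist_le _
      have hd0 : (py.dropUntil x hmem).length = 0 := by omega
      have : x = y := by
        have := (py.dropUntil x hmem)
        exact SimpleGraph.Walk.eq_of_length_eq_zero hd0
      exact hxy.ne this
    -- W : walk from x to r of length m+1, a path
    have hW : (SimpleGraph.Walk.cons hxy py.reverse).IsPath := by
      rw [SimpleGraph.Walk.cons_isPath_iff]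
      refine ⟨hpyp.reverse, ?_⟩
      rwa [SimpleGraph.Walk.support_reverse, List.mem_reverse]
    have hW' : px.reverse.IsPath := hpxp.reverse
    have huniq := hT.existsUnique_path x r
    obtain ⟨q, -, hq⟩ := huniq
    have e1 := hq _ hW
    have e2 := hq _ hW'
    have : (SimpleGraph.Walk.cons hxy py.reverse).length = px.reverse.length := by
      rw [e1, e2]
    simp only [SimpleGraph.Walk.length_cons, SimpleGraph.Walk.length_reverse] at this
    omega
  omega

end TreePowerAux

namespace TreePowerAux
open SimpleGraph Walk

variable {V : Type*} {T : SimpleGraph V} {u v x y z : V}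

/-- In a tree, a vertex has at most one neighbor closer to the root. -/
lemma parent_unique (hT : T.IsTree) (r : V) (hxy : T.Adj x y) (hxz : T.Adj x z)
    (hy : T.dist r y + 1 = T.dist r x) (hz : T.dist r z + 1 = T.dist r x) : y = z := by
  classical
  have hc := hT.isConnected
  obtain ⟨py, hpy⟩ := hc.exists_walk_length_eq_dist r y
  obtain ⟨pz, hpz⟩ := hc.exists_walk_length_eq_dist r z
  have hpyp : py.IsPath := py.isPath_of_length_eq_dist hpy
  have hpzp : pz.IsPath := pz.isPath_of_length_eq_dist hpz
  have hxny : x ∉ py.support := by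
    intro hmem
    have := TreePowerAux.dist_le_of_mem_support py hmem
    omega
  have hxnz : x ∉ pz.support := by
    intro hmem
    have := TreePowerAux.dist_le_of_mem_support pz hmem
    omega
  have hW1 : (SimpleGraph.Walk.cons hxy py.reverse).IsPath := by
    rw [SimpleGraph.Walk.cons_isPath_iff]
    exact ⟨hpyp.reverse, by rwa [SimpleGraph.Walk.support_reverse, List.mem_reverse]⟩
  have hW2 : (SimpleGraph.Walk.cons hxz pz.reverse).IsPath := by
    rw [SimpleGraph.Walk.cons_isPath_iff]
    exact ⟨hpzp.reverse, by rwa [SimpleGraph.Walk.support_reverse, List.mem_reverse]⟩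
  obtain ⟨q, -, hq⟩ := hT.existsUnique_path x r
  have e12 : (SimpleGraph.Walk.cons hxy py.reverse) = (SimpleGraph.Walk.cons hxz pz.reverse) := by
    rw [hq _ hW1, hq _ hW2]
  have : (SimpleGraph.Walk.cons hxy py.reverse).getVert 1
      = (SimpleGraph.Walk.cons hxz pz.reverse).getVert 1 := by rw [e12]
  rwa [SimpleGraph.Walk.getVert_cons_succ (n := 0), SimpleGraph.Walk.getVert_cons_succ (n := 0),
    SimpleGraph.Walk.getVert_zero, SimpleGraph.Walk.getVert_zero] at this

/-- Valley lemma: on a geodesic from `u` to `v` in a tree, with `u` no deeper than `v`,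
all interior vertices are strictly closer to the root than `v`. -/
lemma valley (hT : T.IsTree) (r : V) (p : T.Walk u v) (hp : p.length = T.dist u v)
    (hru : T.dist r u ≤ T.dist r v) {i : ℕ} (h0 : 0 < i) (hiL : i < p.length) :
    T.dist r (p.getVert i) < T.dist r v := by
  have hc := hT.isConnected
  have hDL : T.dist r (p.getVert p.length) = T.dist r v := by rw [p.getVert_length]
  have hD0 : T.dist r (p.getVert 0) = T.dist r u := by rw [p.getVert_zero]
  have hinj : ∀ {a b : ℕ}, a ≤ p.length → b ≤ p.length → p.getVert a = p.getVert b → a = b := by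
    intro a b ha hb hab
    have h1 := (TreePowerAux.geodesic_getVert hc p hp ha).1
    have h2 := (TreePowerAux.geodesic_getVert hc p hp hb).1
    rw [hab] at h1; omega
  have hstep : ∀ j, j < p.length →
      T.dist r (p.getVert (j + 1)) = T.dist r (p.getVert j) + 1 ∨
      T.dist r (p.getVert j) = T.dist r (p.getVert (j + 1)) + 1 := by
    intro j hj
    exact TreePowerAux.adj_dist_step hT r (p.adj_getVert_succ hj)
  have hup : ∀ j, j + 1 < p.length →
      T.dist r (p.getVert (j + 1)) = T.dist r (p.getVert j) + 1 →
      T.dist r (p.getVert (j + 1 + 1)) = T.dist r (p.getVert (j + 1)) + 1 := by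
    intro j hj hup1
    rcases hstep (j + 1) hj with h | h
    · exact h
    · exfalso
      have hadj1 : T.Adj (p.getVert (j + 1)) (p.getVert j) :=
        (p.adj_getVert_succ (by omega)).symm
      have hadj2 : T.Adj (p.getVert (j + 1)) (p.getVert (j + 1 + 1)) := p.adj_getVert_succ hj
      have heq : p.getVert j = p.getVert (j + 1 + 1) :=
        parent_unique hT r hadj1 hadj2 (by omega) (by omega)
      have := hinj (by omega) (by omega) heq
      omega
  have hrun : ∀ a b, a ≤ b → b < p.length →
      T.dist r (p.getVert (a + 1)) = T.dist r (p.getVert a) + 1 →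
      T.dist r (p.getVert (b + 1)) = T.dist r (p.getVert b) + 1 := by
    intro a b hab hbL hSa
    induction b with
    | zero =>
      have ha : a = 0 := by omega
      rwa [ha] at hSa
    | succ b ih =>
      rcases Nat.lt_or_ge a (b + 1) with h | h
      · exact hup b hbL (ih (by omega) (by omega))
      · have ha : a = b + 1 := by omega
        rwa [ha] at hSa
  obtain ⟨it, rfl⟩ : ∃ it, i = it + 1 := ⟨i - 1, by omega⟩
  rcases hstep it (by omega) with hupcase | hdowncase
  · -- goes up into position it+1 : increases all the way to the end
    have hmono : ∀ b, it + 1 ≤ b → b ≤ p.length →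
        T.dist r (p.getVert (it + 1)) + (b - (it + 1)) ≤ T.dist r (p.getVert b) := by
      intro b
      induction b with
      | zero => intro h1 h2; omega
      | succ b ih =>
        intro h1 h2
        rcases Nat.lt_or_ge (it + 1) (b + 1) with h | h
        · have hb := ih (by omega) (by omega)
          have hs := hrun it b (by omega) (by omega) hupcase
          omega
        · have hb : it + 1 = b + 1 := by omega
          rw [← hb]
          omega
    have := hmono p.length (by omega) le_rfl
    omega
  · -- goes down into position it+1 : all previous steps go down
    have hdownall : ∀ t, t < it + 1 → T.dist r (p.getVert t) = T.dist r (p.getVert (t + 1)) + 1 := by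
      intro t ht
      rcases Nat.lt_or_ge t it with h | h
      · rcases hstep t (by omega) with hu | hd
        · exfalso
          have := hrun t it (by omega) (by omega) hu
          omega
        · exact hd
      · have : t = it := by omega
        rw [this]; exact hdowncase
    have hmono : ∀ m, m ≤ it + 1 →
        T.dist r (p.getVert (it + 1)) + m ≤ T.dist r (p.getVert (it + 1 - m)) := by
      intro m
      induction m with
      | zero =>
        intro _
        have e : it + 1 - 0 = it + 1 := by omega
        rw [e]
        omega
      | succ m ih =>
        intro h1
        have hb := ih (by omega)
        have hstep' := hdownall (it + 1 - (m + 1)) (by omega)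
        have e : it + 1 - (m + 1) + 1 = it + 1 - m := by omega
        rw [e] at hstep'
        omega
    have hfin := hmono (it + 1) le_rfl
    have e : it + 1 - (it + 1) = 0 := by omega
    rw [e] at hfin
    omega

end TreePowerAux

namespace TreePowerAux

open Finset

lemma sum_min_bound (k n : ℕ) : k * n ≤ (∑ i ∈ Finset.range n, min k i) + k * (k + 1) / 2 := by
  have hsplit : k * n = (∑ i ∈ Finset.range n, min k i) + ∑ i ∈ Finset.range n, (k - i) := by
    rw [← Finset.sum_add_distrib]
    rw [Finset.sum_congr rfl (fun i _ => show min k i + (k - i) = k by omega)]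
    rw [Finset.sum_const, Finset.card_range, smul_eq_mul, mul_comm]
  have h2 : ∑ i ∈ Finset.range n, (k - i) ≤ ∑ i ∈ Finset.range (k+1), (k - i) := by
    rcases le_or_gt n (k+1) with h | h
    · exact Finset.sum_le_sum_of_subset (Finset.range_subset_range.2 h)
    · have := Finset.sum_subset (Finset.range_subset_range.2 h.le)
        (fun x _ hx => show k - x = 0 by simp [Finset.mem_range] at hx; omega)
      exact this.ge
  have h3 : ∑ i ∈ Finset.range (k+1), (k - i) = ∑ i ∈ Finset.range (k+1), i := by
    rw [← Finset.sum_range_reflect]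
    apply Finset.sum_congr rfl
    intro i hi
    simp only [Finset.mem_range] at hi
    omega
  have h4 : (∑ i ∈ Finset.range (k+1), i) * 2 = k * (k + 1) := by
    have h5 := Finset.sum_range_id_mul_two (k+1)
    simp only [Nat.add_sub_cancel] at h5
    rw [h5, Nat.mul_comm]
  omega

end TreePowerAux

theorem tree_power_edges {V : Type*} [Fintype V] (T : SimpleGraph V) (hT : T.IsTree)
    (k : ℕ) (hk : 1 ≤ k) :
    (k * (Fintype.card V) : ℝ) - k * (k + 1) / 2 ≤ ((T.power k).edgeSet.ncard : ℝ) := by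
  classical
  obtain hV | hV := isEmpty_or_nonempty V
  · have h0 : Fintype.card V = 0 := Fintype.card_eq_zero
    rw [h0]
    have : (0 : ℝ) ≤ ((T.power k).edgeSet.ncard : ℝ) := Nat.cast_nonneg _
    have hknn : (0:ℝ) ≤ (k:ℝ) * ((k:ℝ)+1) / 2 := by positivity
    push_cast
    linarith
  set n := Fintype.card V with hn
  have hnpos : 0 < n := Fintype.card_pos
  have hc := hT.isConnected
  set r : V := Classical.arbitrary V with hr
  set e := Fintype.equivFin V with he
  set key : V → ℕ := fun v => T.dist r v * n + (e v : ℕ) with hkey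
  have keylt : ∀ {a b : V}, T.dist r a < T.dist r b → key a < key b := by
    intro a b h
    have h1 : (e a : ℕ) < n := (e a).isLt
    calc key a = T.dist r a * n + (e a : ℕ) := rfl
    _ < (T.dist r a + 1) * n := by rw [add_mul]; omega
    _ ≤ T.dist r b * n := Nat.mul_le_mul_right n h
    _ ≤ key b := Nat.le_add_right _ _
  have keyle : ∀ {a b : V}, key a < key b → T.dist r a ≤ T.dist r b := by
    intro a b h
    by_contra hcon
    have := keylt (Nat.lt_of_not_le hcon)
    omega
  have keyinj : Function.Injective key := by
    intro a b h
    rcases lt_trichotomy (T.dist r a) (T.dist r b) with h1 | h1 | h1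
    · have := keylt h1; omega
    · have h2 : key a = T.dist r b * n + (e a : ℕ) := by rw [hkey]; simp only; rw [h1]
      have h3 : (e a : ℕ) = (e b : ℕ) := by
        have : T.dist r b * n + (e a : ℕ) = T.dist r b * n + (e b : ℕ) := by
          rw [← h2, h]
        omega
      exact e.injective (Fin.ext h3)
    · have := keylt h1; omega
  set rank : V → ℕ := fun v => (Finset.univ.filter fun u => key u < key v).card with hrank
  set good : V → Finset V :=
    fun v => Finset.univ.filter fun u => key u < key v ∧ T.dist u v ≤ k with hgood
  -- core combinatorial bound
  have core : ∀ v : V, min k (rank v) ≤ (good v).card := by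
    intro v
    by_cases hA : ∀ u, key u < key v → T.dist u v ≤ k
    · have hsub : (Finset.univ.filter fun u => key u < key v) ⊆ good v := by
        intro u hu
        simp only [Finset.mem_filter, Finset.mem_univ, true_and, hgood] at *
        exact ⟨hu, hA u hu⟩
      calc min k (rank v) ≤ rank v := Nat.min_le_right _ _
      _ ≤ (good v).card := Finset.card_le_card hsub
    · push_neg at hA
      obtain ⟨u₀, hu₀k, hu₀d⟩ := hA
      have hmin : min k (rank v) ≤ k := Nat.min_le_left _ _
      suffices hsuff : k ≤ (good v).card by omega
      obtain ⟨p, hp⟩ := hc.exists_walk_length_eq_dist u₀ v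
      have hLk : k < p.length := by omega
      have hmem : ∀ j ∈ Finset.Icc 1 k, p.getVert (p.length - j) ∈ good v := by
        intro j hj
        simp only [Finset.mem_Icc] at hj
        have hidx : p.length - j ≤ p.length := by omega
        have hdist := (TreePowerAux.geodesic_getVert hc p hp hidx).2
        have hdd : p.length - (p.length - j) = j := by omega
        rw [hdd] at hdist
        have hval : T.dist r (p.getVert (p.length - j)) < T.dist r v :=
          TreePowerAux.valley hT r p hp (keyle hu₀k) (by omega) (by omega)
        simp only [hgood, Finset.mem_filter, Finset.mem_univ, true_and]
        exact ⟨keylt hval, by omega⟩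
      have hinj : ∀ j₁ ∈ Finset.Icc 1 k, ∀ j₂ ∈ Finset.Icc 1 k,
          p.getVert (p.length - j₁) = p.getVert (p.length - j₂) → j₁ = j₂ := by
        intro j₁ hj₁ j₂ hj₂ hEq
        simp only [Finset.mem_Icc] at hj₁ hj₂
        have h1 := (TreePowerAux.geodesic_getVert hc p hp (show p.length - j₁ ≤ p.length by omega)).2
        have h2 := (TreePowerAux.geodesic_getVert hc p hp (show p.length - j₂ ≤ p.length by omega)).2
        rw [hEq] at h1
        omega
      calc k = (Finset.Icc 1 k).card := by rw [Nat.card_Icc]; omega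
      _ ≤ (good v).card := Finset.card_le_card_of_injOn _ hmem hinj
  -- ranks form an initial segment
  have rank_lt : ∀ v, rank v < n := by
    intro v
    have hsub : (Finset.univ.filter fun u => key u < key v) ⊆ Finset.univ.erase v := by
      intro u hu
      simp only [Finset.mem_filter, Finset.mem_univ, true_and] at hu
      simp only [Finset.mem_erase, Finset.mem_univ, and_true]
      intro hEq; rw [hEq] at hu; omega
    calc rank v ≤ (Finset.univ.erase v).card := Finset.card_le_card hsub
    _ = n - 1 := by rw [Finset.card_erase_of_mem (Finset.mem_univ v), Finset.card_univ]
    _ < n := by omega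
  have rank_mono : ∀ {a b : V}, key a < key b → rank a < rank b := by
    intro a b h
    apply Finset.card_lt_card
    constructor
    · intro u hu
      simp only [Finset.mem_filter, Finset.mem_univ, true_and] at *
      omega
    · intro hcon
      have := hcon (Finset.mem_filter.2 ⟨Finset.mem_univ a, h⟩)
      simp only [Finset.mem_filter, Finset.mem_univ, true_and] at this
      omega
  have rank_inj : ∀ a ∈ Finset.univ, ∀ b ∈ Finset.univ, rank a = rank b → a = b := by
    intro a _ b _ h
    by_contra hne
    have hkne : key a ≠ key b := fun hEq => hne (keyinj hEq)
    rcases Nat.lt_or_ge (key a) (key b) with h1 | h1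
    · have := rank_mono h1; omega
    · have := rank_mono (Nat.lt_of_le_of_ne h1 (Ne.symm hkne)); omega
  have himage : Finset.univ.image rank = Finset.range n := by
    apply Finset.eq_of_subset_of_card_le
    · intro i hi
      simp only [Finset.mem_image] at hi
      obtain ⟨v, _, hv⟩ := hi
      simp only [Finset.mem_range]
      rw [← hv]; exact rank_lt v
    · rw [Finset.card_range, Finset.card_image_of_injOn rank_inj, Finset.card_univ]
  have sum_eq : ∑ v : V, min k (rank v) = ∑ i ∈ Finset.range n, min k i := by
    rw [← himage, Finset.sum_image rank_inj]
  -- edge counting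
  set P : Finset (V × V) :=
    Finset.univ.biUnion (fun v => (good v).image fun u => (u, v)) with hP
  have hPcard : P.card = ∑ v : V, (good v).card := by
    rw [hP, Finset.card_biUnion]
    · apply Finset.sum_congr rfl
      intro v _
      have hinj2 : Function.Injective (fun u : V => (u, v)) := fun a b hab => by
        simpa using congrArg Prod.fst hab
      exact Finset.card_image_of_injective _ hinj2
    · intro v₁ _ v₂ _ hne
      simp only [Finset.disjoint_left]
      intro a ha hb
      simp only [Finset.mem_image] at ha hb
      obtain ⟨x, _, hx⟩ := ha
      obtain ⟨y, _, hy⟩ := hb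
      rw [← hx] at hy
      have hv : v₂ = v₁ := by simpa using congrArg Prod.snd hy
      exact hne hv.symm
  have hmemP : ∀ q ∈ P, key q.1 < key q.2 ∧ T.dist q.1 q.2 ≤ k := by
    intro q hq
    simp only [hP, Finset.mem_biUnion, Finset.mem_image] at hq
    obtain ⟨v, _, u, hu, hq⟩ := hq
    simp only [hgood, Finset.mem_filter, Finset.mem_univ, true_and] at hu
    rw [← hq]
    exact hu
  have hSfin : (T.power k).edgeSet.Finite := Set.toFinite _
  have hcardle : P.card ≤ hSfin.toFinset.card := by
    apply Finset.card_le_card_of_injOn (fun q : V × V => s(q.1, q.2))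
    · intro q hq
      obtain ⟨h1, h2⟩ := hmemP q hq
      show s(q.1, q.2) ∈ hSfin.toFinset
      simp only [Set.Finite.mem_toFinset, SimpleGraph.mem_edgeSet]
      exact ⟨fun hEq => by rw [hEq] at h1; omega, h2⟩
    · intro q₁ hq₁ q₂ hq₂ hEq
      obtain ⟨ha1, -⟩ := hmemP q₁ hq₁
      obtain ⟨ha2, -⟩ := hmemP q₂ hq₂
      rw [Sym2.eq_iff] at hEq
      rcases hEq with ⟨h1, h2⟩ | ⟨h1, h2⟩
      · exact Prod.ext h1 h2
      · rw [h1, h2] at ha1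
        omega
  have hncard : (T.power k).edgeSet.ncard = hSfin.toFinset.card :=
    Set.ncard_eq_toFinset_card _ hSfin
  -- assemble
  have main_nat : k * n ≤ (T.power k).edgeSet.ncard + k * (k + 1) / 2 := by
    have b1 := TreePowerAux.sum_min_bound k n
    have b2 : ∑ v : V, min k (rank v) ≤ ∑ v : V, (good v).card :=
      Finset.sum_le_sum (fun v _ => core v)
    have b3 : ∑ v : V, (good v).card ≤ (T.power k).edgeSet.ncard := by
      rw [← hPcard, hncard]; exact hcardle
    rw [← sum_eq] at b1
    omega
  obtain ⟨m, hm⟩ := Nat.even_mul_succ_self k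
  have h1 : ((k * n : ℕ) : ℝ) ≤ ((T.power k).edgeSet.ncard : ℝ) + (m : ℝ) := by
    exact_mod_cast (show k * n ≤ (T.power k).edgeSet.ncard + m by omega)
  have h2 : (m : ℝ) + (m : ℝ) = (k : ℝ) * ((k : ℝ) + 1) := by exact_mod_cast hm.symm
  push_cast at h1
  linarith
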